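/- Let ε ∈ (0,1/2), δ^{hor}, δ^{ver} ∈ (0,1) with max{arccos(1−δ^{hor}), arccos(1−δ^{ver})} ≤ π/16, let u be a spin field with horizontal angular velocities θ^{hor}, and set w_{i,j} := (2/δ^{hor})^{1/2}·sin(θ^{hor}_{i,j}/2). Let c_p ∈ ℝ with c_p ≤ 1/2 be such that p(θ₁,θ₂) ≥ c_p for all (θ₁,θ₂) ∈ [−π,π]², and set A^{hor} := {(i,j) ∈ I : i+2 ≤ K and max{|θ^{hor}_{i+1,j}|, |θ^{hor}_{i,j}|} ≥ π/8}. Then δ^{hor}·ε⁴ · Σ_{(i,j) ∈ I, i+2 ≤ K} p(θ^{hor}_{i+1,j}, θ^{hor}_{i,j}) · |(w_{i+1,j} − w_{i,j})/ε|² ≥ (1/2)·δ^{hor}·ε⁴ · Σ_{(i,j) ∈ I, i+2 ≤ K} |(w_{i+1,j} − w_{i,j})/ε|² − 2π²·(1 − 2c_p)·ε² · #A^{hor} (Lemma 3.2, horizontal version). -/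

import Mathlib

open Real Finset

noncomputable section

/-- `Kof ε` is the largest integer `K` with `K * ε < 1`. -/
def Kof (ε : ℝ) : ℤ := ⌈1 / ε⌉ - 1

/-- Index set of the lattice `[0,1)² ∩ εℤ²`. -/
def Idx (ε : ℝ) : Finset (ℤ × ℤ) :=
  Finset.Icc 0 (Kof ε) ×ˢ Finset.Icc 0 (Kof ε)

/-- Indices `(i,j)` with `i + 2 ≤ K`. -/
def IdxH (ε : ℝ) : Finset (ℤ × ℤ) :=
  Finset.Icc 0 (Kof ε - 2) ×ˢ Finset.Icc 0 (Kof ε)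

/-- Indices `(i,j)` with `j + 2 ≤ K`. -/
def IdxV (ε : ℝ) : Finset (ℤ × ℤ) :=
  Finset.Icc 0 (Kof ε) ×ˢ Finset.Icc 0 (Kof ε - 2)

/-- Squared Euclidean norm on `ℝ × ℝ`. -/
def sqnorm (v : ℝ × ℝ) : ℝ := v.1 ^ 2 + v.2 ^ 2

/-- Euclidean scalar product on `ℝ × ℝ`. -/
def dotp (a b : ℝ × ℝ) : ℝ := a.1 * b.1 + a.2 * b.2

/-- Cross product `a × b = a₁b₂ − a₂b₁`. -/
def crossp (a b : ℝ × ℝ) : ℝ := a.1 * b.2 - a.2 * b.1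

/-- sign with convention `sign 0 = -1`. -/
def sgn (x : ℝ) : ℝ := if 0 < x then 1 else -1

/-- A spin field: unit vectors on the lattice. -/
def IsSpin (ε : ℝ) (u : ℤ × ℤ → ℝ × ℝ) : Prop :=
  ∀ p ∈ Idx ε, sqnorm (u p) = 1

/-- Spin fields with ferromagnetic Dirichlet boundary condition on the left boundary. -/
def InS0 (ε : ℝ) (u : ℤ × ℤ → ℝ × ℝ) : Prop :=
  IsSpin ε u ∧ ∀ j ∈ Finset.Icc (0 : ℤ) (Kof ε), u (0, j) = (0, 1)

/-- Horizontal part of the energy. -/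
def Ehor (ε δ : ℝ) (u : ℤ × ℤ → ℝ × ℝ) : ℝ :=
  ε ^ 2 / 2 * ∑ p ∈ IdxH ε,
    sqnorm (u p - (2 * (1 - δ)) • u (p.1 + 1, p.2) + u (p.1 + 2, p.2))

/-- Vertical part of the energy. -/
def Ever (ε δ : ℝ) (u : ℤ × ℤ → ℝ × ℝ) : ℝ :=
  ε ^ 2 / 2 * ∑ p ∈ IdxV ε,
    sqnorm (u p - (2 * (1 - δ)) • u (p.1, p.2 + 1) + u (p.1, p.2 + 2))

/-- The total energy `E_{ε,δ}`. -/
def E (ε δ : ℝ) (u : ℤ × ℤ → ℝ × ℝ) : ℝ := Ehor ε δ u + Ever ε δ u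

/-- The scaling function `s(ε,δ)`. -/
def sfun (ε δ : ℝ) : ℝ :=
  min (δ ^ 2)
    (min (ε * (δ * Real.sqrt δ) * (|Real.log (ε / Real.sqrt δ)| + 1)) (ε * Real.sqrt δ))

/-- Horizontal angular velocity of a spin field. -/
def thetaH (u : ℤ × ℤ → ℝ × ℝ) (p : ℤ × ℤ) : ℝ :=
  sgn (crossp (u p) (u (p.1 + 1, p.2))) * Real.arccos (dotp (u p) (u (p.1 + 1, p.2)))

/-- Vertical angular velocity of a spin field. -/
def thetaV (u : ℤ × ℤ → ℝ × ℝ) (p : ℤ × ℤ) : ℝ :=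
  sgn (crossp (u p) (u (p.1, p.2 + 1))) * Real.arccos (dotp (u p) (u (p.1, p.2 + 1)))

/-- The function `p` of Lemma 3.1. -/
def pfun (θ₁ θ₂ : ℝ) : ℝ :=
  if θ₁ = θ₂ then 1
  else (Real.sin θ₁ ^ 2 + Real.sin θ₂ ^ 2 - (1 - Real.cos (θ₁ + θ₂))) /
    (2 * (Real.sin (θ₂ / 2) - Real.sin (θ₁ / 2)) ^ 2)

end

private lemma keyA (x y q : ℝ) (hx : x^2 ≤ 1/25) (hy : y^2 ≤ 1/25)
    (hq : 0 < q) (hq2 : q^2 = (1-x^2)*(1-y^2)) :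
    4 * (x*y) * q ≤ (x+y)^2 - 4*(x^4 + y^4 - x^2*y^2) := by
  rcases le_or_gt (x*y) 0 with hxy | hxy
  · have hq1 : q ≤ 1 := by nlinarith
    have h1 : q^2 ≤ q := by nlinarith
    nlinarith [sq_nonneg (x+y), sq_nonneg (x-y), sq_nonneg (x*y),
      mul_nonneg hq.le (neg_nonneg.2 hxy)]
  · have hA : 0 ≤ (x+y)^2 - 4*(x^4 + y^4 - x^2*y^2) := by
      nlinarith [sq_nonneg (x-y), sq_nonneg (x+y), sq_nonneg (x^2-y^2)]
    have hP : 16*x^2*y^2*(1-x^2)*(1-y^2) ≤ ((x+y)^2 - 4*(x^4+y^4-x^2*y^2))^2 := by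
      nlinarith [sq_nonneg (x-y), sq_nonneg (x+y), sq_nonneg (x*y), sq_nonneg (x^2-y^2),
        sq_nonneg ((x-y)*(x+y)^2), sq_nonneg (x^2+y^2), mul_pos hxy hxy]
    have ht : (4*(x*y)*q)^2 = 16*x^2*y^2*((1-x^2)*(1-y^2)) := by
      rw [mul_pow, mul_pow, hq2]; ring
    have htpos : 0 < 4*(x*y)*q := by positivity
    nlinarith [ht, hP, hA, htpos]

private lemma core (x y c d : ℝ) (hx2 : x^2 ≤ 1/25) (hy2 : y^2 ≤ 1/25)
    (hc2 : c^2 = 1 - x^2) (hd2 : d^2 = 1 - y^2) (hc : 0 < c) (hd : 0 < d) :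
    1/2 * (2 * (y - x)^2) ≤
      (2*x*c)^2 + (2*y*d)^2 - (1 - ((1 - 2*x^2) * (1 - 2*y^2) - (2*x*c) * (2*y*d))) := by
  have hq2 : (c*d)^2 = (1-x^2)*(1-y^2) := by rw [mul_pow, hc2, hd2]
  have key := keyA x y (c*d) hx2 hy2 (mul_pos hc hd) hq2
  have hc2x : x^2 * c^2 = x^2 * (1 - x^2) := by rw [hc2]
  have hd2y : y^2 * d^2 = y^2 * (1 - y^2) := by rw [hd2]
  nlinarith [key, hc2x, hd2y]

set_option maxHeartbeats 800000 in
lemma pfun_ge_half (a b : ℝ) (ha : |a| ≤ π / 8) (hb : |b| ≤ π / 8)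
    (hs : Real.sin (a / 2) ≠ Real.sin (b / 2)) : 1 / 2 ≤ pfun a b := by
  have hpi : π ≤ 3.2 := by linarith [Real.pi_lt_d2]
  have hpi0 := Real.pi_pos
  have hab : a ≠ b := fun h => hs (by rw [h])
  rw [pfun, if_neg hab]
  have haU : a ≤ π / 8 := (le_abs_self a).trans ha
  have haL : -(π / 8) ≤ a := by linarith [neg_abs_le a]
  have hbU : b ≤ π / 8 := (le_abs_self b).trans hb
  have hbL : -(π / 8) ≤ b := by linarith [neg_abs_le b]
  set x := Real.sin (a / 2) with hxdef
  set y := Real.sin (b / 2) with hydef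
  set c := Real.cos (a / 2) with hcdef
  set d := Real.cos (b / 2) with hddef
  have hden : (0:ℝ) < 2 * (y - x) ^ 2 := by
    have : y - x ≠ 0 := sub_ne_zero.2 (Ne.symm hs)
    positivity
  rw [le_div_iff₀ hden]
  have hx : |x| ≤ 1/5 := by
    calc |x| ≤ |a/2| := Real.abs_sin_le_abs
    _ ≤ 1/5 := by rw [abs_div]; simp only [abs_two]; linarith
  have hy : |y| ≤ 1/5 := by
    calc |y| ≤ |b/2| := Real.abs_sin_le_abs
    _ ≤ 1/5 := by rw [abs_div]; simp only [abs_two]; linarith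
  have hx2 : x^2 ≤ 1/25 := by nlinarith [abs_nonneg x, sq_abs x]
  have hy2 : y^2 ≤ 1/25 := by nlinarith [abs_nonneg y, sq_abs y]
  have hc2 : c^2 = 1 - x^2 := by
    have := Real.sin_sq_add_cos_sq (a/2); linarith
  have hd2 : d^2 = 1 - y^2 := by
    have := Real.sin_sq_add_cos_sq (b/2); linarith
  have hcpos : 0 < c := Real.cos_pos_of_mem_Ioo ⟨by linarith, by linarith⟩
  have hdpos : 0 < d := Real.cos_pos_of_mem_Ioo ⟨by linarith, by linarith⟩
  have hsa : Real.sin a = 2 * x * c := by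
    have h := Real.sin_two_mul (a/2); rw [show 2*(a/2) = a by ring] at h; rw [h]
  have hsb : Real.sin b = 2 * y * d := by
    have h := Real.sin_two_mul (b/2); rw [show 2*(b/2) = b by ring] at h; rw [h]
  have hca : Real.cos a = 1 - 2 * x^2 := by
    have h := Real.cos_two_mul (a/2); rw [show 2*(a/2) = a by ring] at h; rw [h, hc2]; ring
  have hcb : Real.cos b = 1 - 2 * y^2 := by
    have h := Real.cos_two_mul (b/2); rw [show 2*(b/2) = b by ring] at h; rw [h, hd2]; ring
  have hcab : Real.cos (a + b) = (1 - 2*x^2) * (1 - 2*y^2) - (2*x*c) * (2*y*d) := by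
    rw [Real.cos_add, hca, hcb, hsa, hsb]
  rw [hsa, hsb, hcab]
  exact core x y c d hx2 hy2 hc2 hd2 hcpos hdpos

lemma thetaH_mem (u : ℤ × ℤ → ℝ × ℝ) (p : ℤ × ℤ) : thetaH u p ∈ Set.Icc (-π) π := by
  unfold thetaH sgn
  have h1 := Real.arccos_nonneg (dotp (u p) (u (p.1 + 1, p.2)))
  have h2 := Real.arccos_le_pi (dotp (u p) (u (p.1 + 1, p.2)))
  split <;> constructor <;> simp <;> linarith


/-- Lemma 3.2 (horizontal version): lower bound for the `p`-weighted gradient term. -/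
theorem weighted_gradient_lower_bound (ε δhor δver cp : ℝ) (u : ℤ × ℤ → ℝ × ℝ)
    (hε : ε ∈ Set.Ioo (0 : ℝ) (1 / 2))
    (hδh : δhor ∈ Set.Ioo (0 : ℝ) 1) (hδv : δver ∈ Set.Ioo (0 : ℝ) 1)
    (hangle : max (Real.arccos (1 - δhor)) (Real.arccos (1 - δver)) ≤ π / 16)
    (hu : IsSpin ε u)
    (hcp : cp ≤ 1 / 2)
    (hcplow : ∀ θ₁ θ₂ : ℝ, θ₁ ∈ Set.Icc (-π) π → θ₂ ∈ Set.Icc (-π) π → cp ≤ pfun θ₁ θ₂) :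
    δhor * ε ^ 4 * ∑ p ∈ IdxH ε,
        pfun (thetaH u (p.1 + 1, p.2)) (thetaH u p) *
          ((Real.sqrt (2 / δhor) * Real.sin (thetaH u (p.1 + 1, p.2) / 2) -
              Real.sqrt (2 / δhor) * Real.sin (thetaH u p / 2)) / ε) ^ 2
      ≥ 1 / 2 * δhor * ε ^ 4 * ∑ p ∈ IdxH ε,
          ((Real.sqrt (2 / δhor) * Real.sin (thetaH u (p.1 + 1, p.2) / 2) -
              Real.sqrt (2 / δhor) * Real.sin (thetaH u p / 2)) / ε) ^ 2
        - 2 * π ^ 2 * (1 - 2 * cp) * ε ^ 2 *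
            (((IdxH ε).filter
              (fun p => π / 8 ≤ max |thetaH u (p.1 + 1, p.2)| |thetaH u p|)).card : ℝ) := by
  
  set s := IdxH ε with hsdef
  have hεpos : 0 < ε := hε.1
  have hδpos : 0 < δhor := hδh.1
  have hπ3 : 3 < π := Real.pi_gt_three
  have hsqk : Real.sqrt (2 / δhor) ^ 2 = 2 / δhor := Real.sq_sqrt (by positivity)
  set W : ℤ × ℤ → ℝ := fun p =>
      ((Real.sqrt (2 / δhor) * Real.sin (thetaH u (p.1 + 1, p.2) / 2) -
        Real.sqrt (2 / δhor) * Real.sin (thetaH u p / 2)) / ε) ^ 2 with hWdef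
  have key : ∀ p ∈ s,
      1 / 2 * δhor * ε ^ 4 * W p -
        (if π / 8 ≤ max |thetaH u (p.1 + 1, p.2)| |thetaH u p| then
          2 * π ^ 2 * (1 - 2 * cp) * ε ^ 2 else 0)
      ≤ δhor * ε ^ 4 * (pfun (thetaH u (p.1 + 1, p.2)) (thetaH u p) * W p) := by
    intro p _
    set t1 := thetaH u (p.1 + 1, p.2) with ht1
    set t2 := thetaH u p with ht2
    set D := (Real.sin (t1 / 2) - Real.sin (t2 / 2)) ^ 2 with hDdef
    have hW : δhor * ε ^ 4 * W p = 2 * ε ^ 2 * D := by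
      rw [hWdef]
      simp only
      rw [div_pow, hDdef]
      rw [show (Real.sqrt (2 / δhor) * Real.sin (t1 / 2) -
          Real.sqrt (2 / δhor) * Real.sin (t2 / 2)) ^ 2 =
          Real.sqrt (2 / δhor) ^ 2 * (Real.sin (t1 / 2) - Real.sin (t2 / 2)) ^ 2 by ring, hsqk]
      field_simp
    have hWnn : 0 ≤ W p := by rw [hWdef]; positivity
    by_cases hcond : π / 8 ≤ max |t1| |t2|
    · rw [if_pos hcond]
      have hp : cp ≤ pfun t1 t2 := hcplow t1 t2 (thetaH_mem u _) (thetaH_mem u _)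
      have h1 : cp * (δhor * ε ^ 4 * W p) ≤ δhor * ε ^ 4 * (pfun t1 t2 * W p) := by
        have := mul_le_mul_of_nonneg_right hp hWnn
        nlinarith [mul_le_mul_of_nonneg_left this (show (0:ℝ) ≤ δhor * ε ^ 4 by positivity)]
      have hW2 : cp * (δhor * ε ^ 4 * W p) = cp * (2 * ε ^ 2 * D) := by rw [hW]
      have hD4 : D ≤ 4 := by
        rw [hDdef]
        nlinarith [Real.neg_one_le_sin (t1/2), Real.sin_le_one (t1/2),
          Real.neg_one_le_sin (t2/2), Real.sin_le_one (t2/2)]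
      have hD0 : 0 ≤ D := sq_nonneg _
      have hcp2 : 0 ≤ 1 - 2 * cp := by linarith
      have e1 : 0 ≤ (1 - 2 * cp) * ε ^ 2 * (4 - D) :=
        mul_nonneg (mul_nonneg hcp2 (sq_nonneg ε)) (by linarith)
      have e2 : 0 ≤ (1 - 2 * cp) * ε ^ 2 * (2 * π ^ 2 - 4) :=
        mul_nonneg (mul_nonneg hcp2 (sq_nonneg ε)) (by nlinarith)
      nlinarith [h1, hW, hW2, e1, e2]
    · rw [if_neg hcond]
      by_cases hss : Real.sin (t1 / 2) = Real.sin (t2 / 2)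
      · have hW0 : W p = 0 := by
          rw [hWdef]; simp only; rw [hss]; simp [ht2]
        rw [hW0]; simp
      · push_neg at hcond
        have h12 : 1 / 2 ≤ pfun t1 t2 := by
          apply pfun_ge_half _ _ _ _ hss
          · exact le_of_lt (lt_of_le_of_lt (le_max_left _ _) hcond)
          · exact le_of_lt (lt_of_le_of_lt (le_max_right _ _) hcond)
        have := mul_le_mul_of_nonneg_right h12 hWnn
        nlinarith [mul_le_mul_of_nonneg_left this (show (0:ℝ) ≤ δhor * ε ^ 4 by positivity)]
  rw [ge_iff_le]
  have hsum := Finset.sum_le_sum key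
  rw [Finset.sum_sub_distrib] at hsum
  rw [← Finset.sum_filter] at hsum
  rw [Finset.sum_const, nsmul_eq_mul] at hsum
  calc 1 / 2 * δhor * ε ^ 4 * ∑ p ∈ s, W p -
        2 * π ^ 2 * (1 - 2 * cp) * ε ^ 2 *
          ((s.filter (fun p => π / 8 ≤ max |thetaH u (p.1 + 1, p.2)| |thetaH u p|)).card : ℝ)
      = ∑ p ∈ s, 1 / 2 * δhor * ε ^ 4 * W p -
        ((s.filter (fun p => π / 8 ≤ max |thetaH u (p.1 + 1, p.2)| |thetaH u p|)).card : ℝ) *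
          (2 * π ^ 2 * (1 - 2 * cp) * ε ^ 2) := by
        rw [← Finset.mul_sum]; ring
    _ ≤ ∑ p ∈ s, δhor * ε ^ 4 * (pfun (thetaH u (p.1 + 1, p.2)) (thetaH u p) * W p) := hsum
    _ = δhor * ε ^ 4 * ∑ p ∈ s, pfun (thetaH u (p.1 + 1, p.2)) (thetaH u p) * W p := by
        rw [← Finset.mul_sum]
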